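/- Let h ∈ ℂ^{N_b×N_b} be Hermitian, Δ ∈ ℂ^{N_b×N_b} be antisymmetric, and 𝓗 = [[h, Δ], [−Δ̄, −h̄]]. Then for every λ ∈ ℂ, the dimension of the kernel of 𝓗 − λ·I equals the dimension of the kernel of 𝓗 + λ·I. In particular, the multiset of eigenvalues of 𝓗 (roots of its characteristic polynomial, with multiplicity) is invariant under negation, and when the eigenvalues are listed in nondecreasing order ε₁ ≤ ε₂ ≤ … ≤ ε_{2N_b}, one has ε_{N_b} ≤ 0 ≤ ε_{N_b+1}. -/

import Mathlib

open Matrix Polynomial ComplexOrder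
variable {n : Type*} [Fintype n] [DecidableEq n]

lemma aux_conj_rank (B A : Matrix n n ℂ) (hB : B*B = 1) : (B*A*B).rank = A.rank := by
  have hd : IsUnit B.det := IsUnit.of_mul_eq_one _ (by rw [← det_mul, hB, det_one])
  rw [rank_mul_eq_left_of_isUnit_det B _ hd, rank_mul_eq_right_of_isUnit_det B _ hd]

lemma aux_map_conj_rank (A : Matrix n n ℂ) : (A.map (starRingEnd ℂ)).rank = A.rank := by
  have : A.map (starRingEnd ℂ) = (Aᵀ)ᴴ := by ext i j; simp [conjTranspose_apply]
  rw [this, rank_conjTranspose, rank_transpose]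

lemma aux_neg_rank (A : Matrix n n ℂ) : (-A).rank = A.rank := by
  rw [show (-A) = (-1 : Matrix n n ℂ) * A from (neg_one_mul A).symm,
    rank_mul_eq_right_of_isUnit_det]
  rw [isUnit_iff_ne_zero, Matrix.det_neg]; simp [pow_ne_zero]

lemma aux_rank_symm (M S : Matrix n n ℂ) (hM : Mᴴ = M) (hS : S*S = 1)
    (hSMS : S*M*S = -(M.map (starRingEnd ℂ))) (lam : ℂ) :
    (M - lam • 1).rank = (M + lam • 1).rank := by
  have h1 : (M - lam • 1).rank = (M - (starRingEnd ℂ) lam • 1).rank := by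
    conv_lhs => rw [← rank_conjTranspose]
    congr 1
    rw [conjTranspose_sub, hM, conjTranspose_smul, conjTranspose_one]
    rfl
  have h2 : ((M - (starRingEnd ℂ) lam • 1).map (starRingEnd ℂ)) = -(S*(M + lam•1)*S) := by
    have : (M - (starRingEnd ℂ) lam • 1).map (starRingEnd ℂ)
        = M.map (starRingEnd ℂ) - lam • 1 := by
      ext i j
      simp [Matrix.map_apply, Matrix.sub_apply, Matrix.smul_apply, Matrix.one_apply]
      split <;> simp
    rw [this, Matrix.mul_add, Matrix.add_mul, hSMS]
    have : S * (lam • (1:Matrix n n ℂ)) * S = lam • 1 := by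
      rw [Matrix.mul_smul, Matrix.smul_mul, Matrix.mul_one, hS]
    rw [this]
    abel
  rw [h1, ← aux_map_conj_rank, h2, aux_neg_rank, aux_conj_rank _ _ hS]
lemma aux_charpoly_conj (S A : Matrix n n ℂ) (hS : S*S = 1) :
    (S*A*S).charpoly = A.charpoly := by
  have hmul : (S.map (C : ℂ →+* ℂ[X])) * (S.map C) = 1 := by
    rw [← Matrix.map_mul]; rw [hS]; simp
  have key : charmatrix (S*A*S) = (S.map C) * charmatrix A * (S.map C) := by
    unfold charmatrix
    rw [Matrix.mul_sub, Matrix.sub_mul]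
    congr 1
    · rw [scalar_apply, ← Matrix.smul_one_eq_diagonal, Matrix.mul_smul, Matrix.smul_mul,
        Matrix.mul_one, hmul]
    · rw [RingHom.mapMatrix_apply, RingHom.mapMatrix_apply, ← Matrix.map_mul, ← Matrix.map_mul]
  have hdet : (S.map (C : ℂ →+* ℂ[X])).det * (S.map C).det = 1 := by
    rw [← det_mul, hmul, det_one]
  unfold Matrix.charpoly
  rw [key, det_mul, det_mul]
  rw [mul_comm, ← mul_assoc, mul_comm ((S.map C).det), hdet, one_mul]

lemma aux_charpoly_transpose (A : Matrix n n ℂ) : (Aᵀ).charpoly = A.charpoly := by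
  have : charmatrix (Aᵀ) = (charmatrix A)ᵀ := by
    apply Matrix.ext; intro i j
    by_cases hij : i = j
    · subst hij; simp [charmatrix_apply_eq]
    · simp [charmatrix_apply_ne _ _ _ hij, charmatrix_apply_ne _ _ _ (Ne.symm hij)]
  rw [Matrix.charpoly, this, det_transpose, Matrix.charpoly]

lemma aux_charpoly_comp_neg (A : Matrix n n ℂ) (hcard : Even (Fintype.card n)) :
    (A.charpoly).comp (-X) = (-A).charpoly := by
  have hφ : ∀ p : ℂ[X], p.comp (-X) = (Polynomial.aeval (-X : ℂ[X])).toRingHom p := fun p => rfl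
  rw [hφ, Matrix.charpoly, RingHom.map_det]
  have key : (charmatrix A).map (Polynomial.aeval (-X : ℂ[X])).toRingHom = -(charmatrix (-A)) := by
    apply Matrix.ext; intro i j
    by_cases hij : i = j
    · subst hij
      simp [charmatrix_apply_eq]
      ring
    · rw [Matrix.map_apply, charmatrix_apply_ne _ _ _ hij, Matrix.neg_apply,
        charmatrix_apply_ne _ _ _ hij]
      simp
  rw [show ((Polynomial.aeval (-X : ℂ[X])).toRingHom.mapMatrix A.charmatrix) = -(charmatrix (-A)) from key, Matrix.det_neg, Even.neg_one_pow hcard, one_mul, Matrix.charpoly]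

lemma aux_charpoly_neg_eq (M S : Matrix n n ℂ) (hM : Mᴴ = M) (hS : S*S = 1)
    (hSMS : S*M*S = -(M.map (starRingEnd ℂ))) : (-M).charpoly = M.charpoly := by
  have hreal : ∀ A : Matrix n n ℂ, Aᴴ = A →
      (A.charpoly).map (starRingEnd ℂ) = A.charpoly := by
    intro A hA
    have ht : Aᵀ = A.map (starRingEnd ℂ) := by
      apply Matrix.ext; intro i j
      have hc := congrFun (congrFun hA j) i
      rw [conjTranspose_apply] at hc
      simpa using hc.symm
    have h2 := aux_charpoly_transpose A
    rw [ht, Matrix.charpoly_map] at h2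
    exact h2
  have h1 : (((-M).map (starRingEnd ℂ))).charpoly = M.charpoly := by
    rw [show (-M).map (starRingEnd ℂ) = S*M*S by
      rw [hSMS]; apply Matrix.ext; intro i j; simp]
    exact aux_charpoly_conj S M hS
  rw [Matrix.charpoly_map] at h1
  have hMneg : (-M)ᴴ = -M := by rw [conjTranspose_neg, hM]
  rw [hreal _ hMneg] at h1
  exact h1

lemma aux_roots_neg (M : Matrix n n ℂ) [Nonempty n] (hcard : Even (Fintype.card n))
    (hneg : (-M).charpoly = M.charpoly) :
    M.charpoly.roots.map (fun z => -z) = M.charpoly.roots := by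
  classical
  set p := M.charpoly with hp
  have hm : p.Monic := Matrix.charpoly_monic M
  have hsplit : p.Splits := IsAlgClosed.splits p
  have hprod : p = (p.roots.map (fun a => X - C a)).prod :=
    hsplit.eq_prod_roots_of_monic hm
  have hcardroots : Even (Multiset.card p.roots) := by
    have h1 : p.natDegree = Multiset.card p.roots := by
      have h2 := Polynomial.Splits.natDegree_eq_card_roots hsplit
      simpa using h2
    rw [← h1, hp, Matrix.charpoly_natDegree_eq_dim]
    exact hcard
  have hcomp : p.comp (-X) = p := by
    rw [hp, aux_charpoly_comp_neg M hcard, hneg]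
  have key : ((p.roots.map (fun a => -a)).map (fun a => X - C a)).prod = p := by
    rw [Multiset.map_map]
    have e1 : ∀ r : ℂ, (X - C (-r)) = -((X - C r).comp (-X)) := by
      intro r; simp [sub_comp]; ring
    calc (p.roots.map (fun a => X - C (-a))).prod
        = (p.roots.map (fun r => -((X - C r).comp (-X)))).prod := by
          congr 1; exact Multiset.map_congr rfl (fun r _ => e1 r)
      _ = (-1)^(Multiset.card p.roots) * (p.roots.map (fun r => (X - C r).comp (-X))).prod := by
          have hn := Multiset.prod_map_neg (p.roots.map (fun r => (X - C r).comp (-X)))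
          rw [Multiset.map_map, Multiset.card_map] at hn
          exact hn
      _ = (p.roots.map (fun r => (X - C r).comp (-X))).prod := by
          rw [Even.neg_one_pow hcardroots, one_mul]
      _ = ((p.roots.map (fun a => X - C a)).prod).comp (-X) := by
          have := map_multiset_prod (Polynomial.aeval (R := ℂ) (-X : ℂ[X])).toRingHom
            (p.roots.map (fun a => X - C a))
          rw [Multiset.map_map] at this
          exact this.symm
      _ = p.comp (-X) := by rw [← hprod]
      _ = p := hcomp
  conv_rhs => rw [show p.roots = (((p.roots.map (fun a => -a)).map (fun a => X - C a)).prod).roots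
    by rw [key]]
  rw [roots_multiset_prod_X_sub_C]

lemma aux_ker_eq (A B : Matrix n n ℂ) (hr : A.rank = B.rank) :
    Module.finrank ℂ (LinearMap.ker A.mulVecLin) = Module.finrank ℂ (LinearMap.ker B.mulVecLin) := by
  have ha : A.rank + Module.finrank ℂ (LinearMap.ker A.mulVecLin) = Module.finrank ℂ (n → ℂ) :=
    LinearMap.finrank_range_add_finrank_ker A.mulVecLin
  have hb : B.rank + Module.finrank ℂ (LinearMap.ker B.mulVecLin) = Module.finrank ℂ (n → ℂ) :=
    LinearMap.finrank_range_add_finrank_ker B.mulVecLin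
  omega

section Main
variable (Nb : ℕ) (h Δ : Matrix (Fin Nb) (Fin Nb) ℂ)

lemma aux_blocks (hh : hᴴ = h) (hΔ : Δᵀ = -Δ) :
    let M := Matrix.fromBlocks h Δ (-(Δ.map (starRingEnd ℂ))) (-(h.map (starRingEnd ℂ)))
    let S : Matrix (Fin Nb ⊕ Fin Nb) (Fin Nb ⊕ Fin Nb) ℂ := Matrix.fromBlocks 0 1 1 0
    Mᴴ = M ∧ S*S = 1 ∧ S*M*S = -(M.map (starRingEnd ℂ)) := by
  intro M S
  have hT : hᵀ = h.map (starRingEnd ℂ) := by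
    apply Matrix.ext; intro i j
    have hc := congrFun (congrFun hh j) i
    rw [conjTranspose_apply] at hc
    simpa using hc.symm
  refine ⟨?_, ?_, ?_⟩
  · show (Matrix.fromBlocks h Δ (-(Δ.map (starRingEnd ℂ))) (-(h.map (starRingEnd ℂ))))ᴴ
      = Matrix.fromBlocks h Δ (-(Δ.map (starRingEnd ℂ))) (-(h.map (starRingEnd ℂ)))
    have e1 : (-(Δ.map (starRingEnd ℂ)))ᴴ = Δ := by
      rw [conjTranspose_neg]
      have : (Δ.map (starRingEnd ℂ))ᴴ = Δᵀ := by
        apply Matrix.ext; intro i j; simp [conjTranspose_apply]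
      rw [this, hΔ, neg_neg]
    have e2 : Δᴴ = -(Δ.map (starRingEnd ℂ)) := by
      have : Δᴴ = (Δᵀ).map (starRingEnd ℂ) := by
        apply Matrix.ext; intro i j; simp [conjTranspose_apply]
      rw [this, hΔ]
      apply Matrix.ext; intro i j; simp
    have e3 : (-(h.map (starRingEnd ℂ)))ᴴ = -(h.map (starRingEnd ℂ)) := by
      rw [conjTranspose_neg]
      congr 1
      have : (h.map (starRingEnd ℂ))ᴴ = hᵀ := by
        apply Matrix.ext; intro i j; simp [conjTranspose_apply]
      rw [this, hT]
    rw [Matrix.fromBlocks_conjTranspose, hh, e1, e2, e3]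
  · show Matrix.fromBlocks 0 1 1 0 * Matrix.fromBlocks 0 1 1 0 = 1
    rw [Matrix.fromBlocks_multiply]
    simp [Matrix.fromBlocks_one]
  · show Matrix.fromBlocks 0 1 1 0 * Matrix.fromBlocks h Δ _ _ * Matrix.fromBlocks 0 1 1 0 = _
    rw [Matrix.fromBlocks_multiply, Matrix.fromBlocks_multiply]
    apply Matrix.ext; intro i j
    cases i <;> cases j <;> simp [M, Matrix.fromBlocks, Matrix.map_apply]

end Main

lemma aux_eps (Nb : ℕ) (hNb : 0 < Nb) (R : Multiset ℂ)
    (hneg : R.map (fun z => -z) = R)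
    (ε : Fin (Nb + Nb) → ℝ) (hmono : Monotone ε)
    (hmap : (Finset.univ.val.map fun i => ((ε i : ℂ))) = R) :
    ε ⟨Nb - 1, Nat.lt_of_lt_of_le (Nat.sub_lt hNb Nat.one_pos) (Nat.le_add_right Nb Nb)⟩ ≤ 0 ∧
      0 ≤ ε ⟨Nb, Nat.lt_add_of_pos_right hNb⟩ := by
  classical
  set P : Finset (Fin (Nb+Nb)) := Finset.univ.filter (fun i => 0 < ε i) with hP
  set N : Finset (Fin (Nb+Nb)) := Finset.univ.filter (fun i => ε i < 0) with hN
  have h1 : (Finset.univ.val.map fun i => ((-(ε i) : ℝ) : ℂ)) = R := by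
    rw [← hneg, ← hmap, Multiset.map_map]
    apply Multiset.map_congr rfl
    intro i _
    simp
  have c1 : R.countP (fun z : ℂ => 0 < z.re) = P.card := by
    rw [← hmap, Multiset.countP_map, hP, Finset.card_filter]
    simp [Multiset.countP_eq_card_filter, Finset.filter_val]
    congr 1
  have c2 : R.countP (fun z : ℂ => 0 < z.re) = N.card := by
    rw [← h1, Multiset.countP_map, hN, Finset.card_filter]
    simp [Multiset.countP_eq_card_filter, Finset.filter_val, neg_pos]
    congr 1
  have hdisj : Disjoint P N := by
    rw [Finset.disjoint_left]
    intro i hiP hiN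
    rw [hP, Finset.mem_filter] at hiP
    rw [hN, Finset.mem_filter] at hiN
    linarith [hiP.2, hiN.2]
  have hsum : P.card + N.card ≤ Nb + Nb := by
    rw [← Finset.card_union_of_disjoint hdisj]
    calc (P ∪ N).card ≤ (Finset.univ : Finset (Fin (Nb+Nb))).card :=
          Finset.card_le_card (Finset.subset_univ _)
      _ = Nb + Nb := by simp
  have hk : P.card ≤ Nb := by omega
  constructor
  · by_contra hc
    push_neg at hc
    have hbig : Nb + 1 ≤ P.card := by
      have := Finset.card_le_card_of_injOn
        (f := fun j : Fin (Nb+1) => (⟨Nb - 1 + j.val, by omega⟩ : Fin (Nb+Nb)))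
        (s := Finset.univ) (t := P) ?_ ?_
      · simpa using this
      · intro j _
        rw [hP, Finset.mem_coe, Finset.mem_filter]
        refine ⟨Finset.mem_univ _, lt_of_lt_of_le hc ?_⟩
        apply hmono
        simp [Fin.le_def]
      · intro a _ b _ hab
        have := congrArg Fin.val hab
        simp at this
        exact Fin.ext (by omega)
    omega
  · by_contra hc
    push_neg at hc
    have hbig : Nb + 1 ≤ N.card := by
      have := Finset.card_le_card_of_injOn
        (f := fun j : Fin (Nb+1) => (⟨j.val, by omega⟩ : Fin (Nb+Nb)))
        (s := Finset.univ) (t := N) ?_ ?_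
      · simpa using this
      · intro j _
        rw [hN, Finset.mem_coe, Finset.mem_filter]
        refine ⟨Finset.mem_univ _, lt_of_le_of_lt ?_ hc⟩
        apply hmono
        simp [Fin.le_def]
        omega
      · intro a _ b _ hab
        have := congrArg Fin.val hab
        simp at this
        exact Fin.ext (by omega)
    omega


/-- Spectral symmetry of the quasi-particle Hamiltonian
`𝓗 = [[h, Δ], [−Δ̄, −h̄]]`: the kernel of `𝓗 − λI` has the same
dimension as that of `𝓗 + λI` for every `λ`; the multiset of eigenvalues
(roots of the characteristic polynomial with multiplicity) is invariant
under negation; and any nondecreasing listing `ε` of the eigenvalues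
satisfies `ε_{N_b} ≤ 0 ≤ ε_{N_b+1}`. -/
theorem quasiparticle_spectrum_symmetric
    (Nb : ℕ) (hNb : 0 < Nb)
    (h Δ : Matrix (Fin Nb) (Fin Nb) ℂ)
    (hh : hᴴ = h) (hΔ : Δᵀ = -Δ) :
    (∀ lam : ℂ,
      Module.finrank ℂ (LinearMap.ker
        ((Matrix.fromBlocks h Δ (-(Δ.map (starRingEnd ℂ)))
            (-(h.map (starRingEnd ℂ))) - lam • 1).mulVecLin)) =
      Module.finrank ℂ (LinearMap.ker
        ((Matrix.fromBlocks h Δ (-(Δ.map (starRingEnd ℂ)))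
            (-(h.map (starRingEnd ℂ))) + lam • 1).mulVecLin))) ∧
    ((Matrix.fromBlocks h Δ (-(Δ.map (starRingEnd ℂ)))
        (-(h.map (starRingEnd ℂ)))).charpoly.roots.map (fun z => -z) =
      (Matrix.fromBlocks h Δ (-(Δ.map (starRingEnd ℂ)))
        (-(h.map (starRingEnd ℂ)))).charpoly.roots) ∧
    (∀ ε : Fin (Nb + Nb) → ℝ, Monotone ε →
      (Finset.univ.val.map fun i => ((ε i : ℂ))) =
        (Matrix.fromBlocks h Δ (-(Δ.map (starRingEnd ℂ)))
          (-(h.map (starRingEnd ℂ)))).charpoly.roots →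
      ε ⟨Nb - 1, by omega⟩ ≤ 0 ∧ 0 ≤ ε ⟨Nb, by omega⟩) := by
  obtain ⟨hM, hS, hSMS⟩ := aux_blocks Nb h Δ hh hΔ
  haveI : Nonempty (Fin Nb ⊕ Fin Nb) := ⟨Sum.inl ⟨0, hNb⟩⟩
  have hcard : Even (Fintype.card (Fin Nb ⊕ Fin Nb)) := by
    rw [Fintype.card_sum, Fintype.card_fin]
    exact Even.add_self Nb
  have hroots := aux_roots_neg
    (Matrix.fromBlocks h Δ (-(Δ.map (starRingEnd ℂ))) (-(h.map (starRingEnd ℂ)))) hcard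
    (aux_charpoly_neg_eq _ _ hM hS hSMS)
  refine ⟨?_, hroots, ?_⟩
  · intro lam
    exact aux_ker_eq _ _ (aux_rank_symm _ _ hM hS hSMS lam)
  · intro ε hmono hmap
    exact aux_eps Nb hNb _ hroots ε hmono hmap
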